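/- For any positive definite real (or complex Hermitian) matrix σ and any Hermitian matrices A and B of the same size, the integral ∫₀^∞ Tr[A (σ + sI)^{-1} B (σ + sI)^{-1}] ds, expressed in an eigenbasis of σ with eigenvalues λ_k, equals ∑_{k,ℓ} c(λ_k, λ_ℓ) ⟨k|A|ℓ⟩⟨ℓ|B|k⟩, where c(x, x) = 1/x and c(x, y) = (ln x − ln y)/(x − y) for x ≠ y. -/

import Mathlib

open MeasureTheory Matrix
open scoped ComplexOrder

/-- The inverse logarithmic mean kernel. -/
noncomputable def cKM (x y : ℝ) : ℝ :=
  if x = y then 1 / x else (Real.log x - Real.log y) / (x - y)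

open Filter

lemma cKM_key (x y : ℝ) (hx : 0 < x) (hy : 0 < y) :
    ∃ g : ℝ → ℝ, ContinuousWithinAt g (Set.Ici 0) 0 ∧
      (∀ s ∈ Set.Ioi (0:ℝ), HasDerivAt g ((x + s)⁻¹ * (y + s)⁻¹) s) ∧
      Tendsto g atTop (nhds 0) ∧ g 0 = -cKM x y := by
  by_cases hxy : x = y
  · subst hxy
    refine ⟨fun s => -(x + s)⁻¹, ?_, ?_, ?_, ?_⟩
    · have hc : ContinuousOn (fun s : ℝ => -(x + s)⁻¹) (Set.Ici 0) := by
        apply ContinuousOn.neg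
        exact (continuousOn_const.add continuousOn_id).inv₀
          (fun s hs => by have : (0:ℝ) ≤ s := hs; show x + s ≠ 0; positivity)
      exact hc 0 Set.self_mem_Ici
    · intro s hs
      have hs0 : (0:ℝ) < s := hs
      have h1 : HasDerivAt (fun t : ℝ => x + t) 1 s := (hasDerivAt_id s).const_add x
      have h2 := (h1.inv (by positivity : x + s ≠ 0)).neg
      refine h2.congr_deriv ?_
      field_simp
      try ring
    · have : Tendsto (fun s : ℝ => x + s) atTop atTop :=
        tendsto_atTop_add_const_left _ x tendsto_id
      simpa using (this.inv_tendsto_atTop).neg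
    · simp [cKM, one_div]
  · refine ⟨fun s => (Real.log (x + s) - Real.log (y + s)) / (y - x), ?_, ?_, ?_, ?_⟩
    · apply ContinuousWithinAt.div_const
      have hc : ContinuousOn (fun s : ℝ =>
          Real.log (x + s) - Real.log (y + s)) (Set.Ici 0) := by
        apply ContinuousOn.sub
        · exact (continuousOn_const.add continuousOn_id).log
            (fun s hs => by have : (0:ℝ) ≤ s := hs; show x + s ≠ 0; positivity)
        · exact (continuousOn_const.add continuousOn_id).log
            (fun s hs => by have : (0:ℝ) ≤ s := hs; show y + s ≠ 0; positivity)
      exact hc 0 Set.self_mem_Ici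
    · intro s hs
      have hs' : (0:ℝ) < s := hs
      have h1 : HasDerivAt (fun t : ℝ => x + t) 1 s := (hasDerivAt_id s).const_add x
      have h2 : HasDerivAt (fun t : ℝ => y + t) 1 s := (hasDerivAt_id s).const_add y
      have hxs : (0:ℝ) < x + s := by positivity
      have hys : (0:ℝ) < y + s := by positivity
      have := ((h1.log hxs.ne').sub (h2.log hys.ne')).div_const (y - x)
      refine this.congr_deriv ?_
      have hyx : y - x ≠ 0 := sub_ne_zero.mpr (Ne.symm hxy)
      field_simp
      try ring
    · have hratio : Tendsto (fun s : ℝ => (x + s) / (y + s)) atTop (nhds 1) := by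
        have h1 : Tendsto (fun s : ℝ => (x - y) / (y + s)) atTop (nhds 0) := by
          have : Tendsto (fun s : ℝ => y + s) atTop atTop :=
            tendsto_atTop_add_const_left _ y tendsto_id
          simpa [div_eq_mul_inv] using this.inv_tendsto_atTop.const_mul (x - y)
        have h2 : Tendsto (fun s : ℝ => 1 + (x - y) / (y + s)) atTop (nhds 1) := by
          simpa using (tendsto_const_nhds.add h1)
        apply h2.congr'
        filter_upwards [eventually_gt_atTop (0:ℝ)] with s hs
        have hys : y + s ≠ 0 := by positivity
        field_simp
        ring
      have hlog : Tendsto (fun s : ℝ => Real.log (x + s) - Real.log (y + s)) atTop (nhds 0) := by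
        have := (Real.continuousAt_log one_ne_zero).tendsto.comp hratio
        simp only [Real.log_one] at this
        apply this.congr'
        filter_upwards [eventually_gt_atTop (0:ℝ)] with s hs
        have hxs : (0:ℝ) < x + s := by positivity
        have hys : (0:ℝ) < y + s := by positivity
        simp [Function.comp, Real.log_div hxs.ne' hys.ne']
      simpa using hlog.div_const (y - x)
    · simp only [add_zero]
      rw [cKM, if_neg hxy]
      have hyx : y - x ≠ 0 := sub_ne_zero.mpr (Ne.symm hxy)
      have hxy' : x - y ≠ 0 := sub_ne_zero.mpr hxy
      field_simp
      ring

lemma cKM_integrableOn (x y : ℝ) (hx : 0 < x) (hy : 0 < y) :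
    IntegrableOn (fun s => (x + s)⁻¹ * (y + s)⁻¹) (Set.Ioi 0) := by
  obtain ⟨g, hc, hd, ht, -⟩ := cKM_key x y hx hy
  exact integrableOn_Ioi_deriv_of_nonneg hc hd
    (fun s hs => by have : (0:ℝ) < s := hs; positivity) ht

lemma cKM_integral (x y : ℝ) (hx : 0 < x) (hy : 0 < y) :
    ∫ s in Set.Ioi (0:ℝ), (x + s)⁻¹ * (y + s)⁻¹ = cKM x y := by
  obtain ⟨g, hc, hd, ht, hg0⟩ := cKM_key x y hx hy
  rw [integral_Ioi_of_hasDerivAt_of_nonneg hc hd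
    (fun s hs => by have : (0:ℝ) < s := hs; positivity) ht, hg0]
  ring
open Matrix in
lemma trace_helper {n : ℕ} (A B U F : Matrix (Fin n) (Fin n) ℂ) :
    Matrix.trace (A * (U * F * Uᴴ) * B * (U * F * Uᴴ)) =
    Matrix.trace (Uᴴ * A * U * F * (Uᴴ * B * U * F)) := by
  rw [show A * (U * F * Uᴴ) * B * (U * F * Uᴴ) =
      (A * (U * F * Uᴴ) * B * (U * F)) * Uᴴ by simp only [Matrix.mul_assoc],
    Matrix.trace_mul_comm]
  congr 1
  simp only [Matrix.mul_assoc]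

lemma trace_diag {n : ℕ} (M N : Matrix (Fin n) (Fin n) ℂ) (f : Fin n → ℂ) :
    Matrix.trace (M * Matrix.diagonal f * (N * Matrix.diagonal f)) =
      ∑ k, ∑ ℓ, f k * f ℓ * (M k ℓ * N ℓ k) := by
  simp only [Matrix.trace, Matrix.diag, Matrix.mul_apply, Matrix.diagonal_apply,
    mul_ite, mul_zero, ite_mul, zero_mul, Finset.sum_ite_eq', Finset.sum_ite_eq,
    Finset.mem_univ, if_true]
  refine Finset.sum_congr rfl fun k _ => ?_
  refine Finset.sum_congr rfl fun ℓ _ => ?_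
  ring

lemma entry_helper {n : ℕ} (A : Matrix (Fin n) (Fin n) ℂ) (u : Fin n → (Fin n → ℂ))
    (k ℓ : Fin n) :
    ((Matrix.of fun i k => u k i)ᴴ * A * (Matrix.of fun i k => u k i)) k ℓ
      = star (u k) ⬝ᵥ A.mulVec (u ℓ) := by
  simp only [Matrix.mul_apply, Matrix.conjTranspose_apply, Matrix.of_apply,
    dotProduct, Matrix.mulVec, Pi.star_apply, Finset.sum_mul, Finset.mul_sum]
  rw [Finset.sum_comm]
  refine Finset.sum_congr rfl fun i _ => ?_
  refine Finset.sum_congr rfl fun j _ => ?_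
  ring

/-- Integral representation of the Kubo--Mori kernel: for a positive definite
Hermitian matrix σ with orthonormal eigenbasis `u` and eigenvalues `lam`, and
Hermitian matrices A, B,
∫₀^∞ Tr[A (σ + sI)⁻¹ B (σ + sI)⁻¹] ds = ∑_{k,ℓ} c(λ_k, λ_ℓ) ⟨k|A|ℓ⟩⟨ℓ|B|k⟩. -/
theorem kuboMori_integral_representation {n : ℕ}
    (σ A B : Matrix (Fin n) (Fin n) ℂ)
    (hσ : σ.PosDef) (hA : A.IsHermitian) (hB : B.IsHermitian)
    (lam : Fin n → ℝ) (u : Fin n → (Fin n → ℂ))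
    (hlam : ∀ k, 0 < lam k)
    (horth : ∀ k ℓ, star (u k) ⬝ᵥ u ℓ = if k = ℓ then (1 : ℂ) else 0)
    (heig : ∀ k, σ.mulVec (u k) = (lam k : ℂ) • u k) :
    (∫ s in Set.Ioi (0 : ℝ),
        Matrix.trace (A * (σ + (s : ℂ) • (1 : Matrix (Fin n) (Fin n) ℂ))⁻¹ *
          B * (σ + (s : ℂ) • (1 : Matrix (Fin n) (Fin n) ℂ))⁻¹))
      = ∑ k, ∑ ℓ, (cKM (lam k) (lam ℓ) : ℂ) *
          (star (u k) ⬝ᵥ A.mulVec (u ℓ)) * (star (u ℓ) ⬝ᵥ B.mulVec (u k)) := by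

  classical
  set U : Matrix (Fin n) (Fin n) ℂ := Matrix.of fun i k => u k i with hUdef
  have hUU : Uᴴ * U = 1 := by
    ext k ℓ
    have := horth k ℓ
    simpa [hUdef, Matrix.mul_apply, Matrix.conjTranspose_apply, dotProduct,
      Matrix.one_apply] using this
  have hUUt : U * Uᴴ = 1 := mul_eq_one_comm.mp hUU
  have hdiag : σ * U = U * Matrix.diagonal (fun k => (lam k : ℂ)) := by
    ext i ℓ
    have h := congrFun (heig ℓ) i
    simp only [Matrix.mulVec, dotProduct, Pi.smul_apply, smul_eq_mul] at h
    simp only [hUdef, Matrix.mul_apply, Matrix.of_apply, Matrix.diagonal_apply,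
      mul_ite, mul_zero, Finset.sum_ite_eq', Finset.mem_univ, if_true]
    rw [h]; ring
  have hσ_eq : σ = U * Matrix.diagonal (fun k => (lam k : ℂ)) * Uᴴ := by
    calc σ = σ * (U * Uᴴ) := by rw [hUUt, mul_one]
    _ = (σ * U) * Uᴴ := by rw [mul_assoc]
    _ = _ := by rw [hdiag]
  have hMA : ∀ k ℓ, (Uᴴ * A * U) k ℓ = star (u k) ⬝ᵥ A.mulVec (u ℓ) :=
    fun k ℓ => entry_helper A u k ℓ
  have hMB : ∀ k ℓ, (Uᴴ * B * U) ℓ k = star (u ℓ) ⬝ᵥ B.mulVec (u k) :=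
    fun k ℓ => entry_helper B u ℓ k
  -- pointwise identity
  have hpt : ∀ s ∈ Set.Ioi (0:ℝ),
      Matrix.trace (A * (σ + (s : ℂ) • (1 : Matrix (Fin n) (Fin n) ℂ))⁻¹ *
          B * (σ + (s : ℂ) • (1 : Matrix (Fin n) (Fin n) ℂ))⁻¹)
        = ∑ k, ∑ ℓ, ((((lam k + s)⁻¹ * (lam ℓ + s)⁻¹ : ℝ)) : ℂ) *
            ((star (u k) ⬝ᵥ A.mulVec (u ℓ)) * (star (u ℓ) ⬝ᵥ B.mulVec (u k))) := by
    intro s hs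
    have hs0 : (0:ℝ) < s := hs
    have hne : ∀ k, (lam k : ℂ) + (s:ℂ) ≠ 0 := by
      intro k
      have : ((lam k + s : ℝ) : ℂ) ≠ 0 := by
        rw [Complex.ofReal_ne_zero]
        have := hlam k; positivity
      simpa using this
    set F : Matrix (Fin n) (Fin n) ℂ :=
      Matrix.diagonal (fun k => ((lam k : ℂ) + (s:ℂ))⁻¹) with hF
    have hE : σ + (s : ℂ) • (1 : Matrix (Fin n) (Fin n) ℂ)
        = U * Matrix.diagonal (fun k => (lam k : ℂ) + (s:ℂ)) * Uᴴ := by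
      have h1 : (s : ℂ) • (1 : Matrix (Fin n) (Fin n) ℂ)
          = U * ((s : ℂ) • (1 : Matrix (Fin n) (Fin n) ℂ)) * Uᴴ := by
        rw [Matrix.mul_smul, Matrix.mul_one, Matrix.smul_mul, hUUt]
      rw [hσ_eq]
      nth_rewrite 1 [h1]
      rw [← Matrix.add_mul, ← Matrix.mul_add]
      congr 2
      ext i j
      by_cases h : i = j <;> simp [Matrix.diagonal_apply, Matrix.one_apply, h]
    have hinv : (σ + (s : ℂ) • (1 : Matrix (Fin n) (Fin n) ℂ))⁻¹ = U * F * Uᴴ := by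
      apply Matrix.inv_eq_right_inv
      rw [hE]
      calc U * Matrix.diagonal (fun k => (lam k : ℂ) + (s:ℂ)) * Uᴴ * (U * F * Uᴴ)
          = U * (Matrix.diagonal (fun k => (lam k : ℂ) + (s:ℂ)) * (Uᴴ * U) * F) * Uᴴ := by
            simp only [Matrix.mul_assoc]
        _ = U * (Matrix.diagonal (fun k => (lam k : ℂ) + (s:ℂ)) * F) * Uᴴ := by
            rw [hUU, Matrix.mul_one]
        _ = U * Uᴴ := by
            rw [hF, Matrix.diagonal_mul_diagonal]
            congr 1
            rw [show ((fun k => ((lam k : ℂ) + (s:ℂ)) * ((lam k : ℂ) + (s:ℂ))⁻¹))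
              = fun _ => 1 from funext fun k => mul_inv_cancel₀ (hne k),
              Matrix.diagonal_one, Matrix.mul_one]
        _ = 1 := hUUt
    rw [hinv, trace_helper, hF, trace_diag]
    refine Finset.sum_congr rfl fun k _ => Finset.sum_congr rfl fun ℓ _ => ?_
    rw [hMA, hMB]
    push_cast
    ring
  rw [setIntegral_congr_fun measurableSet_Ioi hpt]
  -- turn double sums into sums over the product type
  have hsum : ∀ s : ℝ, (∑ k, ∑ ℓ, ((((lam k + s)⁻¹ * (lam ℓ + s)⁻¹ : ℝ)) : ℂ) *
      ((star (u k) ⬝ᵥ A.mulVec (u ℓ)) * (star (u ℓ) ⬝ᵥ B.mulVec (u k))))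
      = ∑ p : Fin n × Fin n, ((((lam p.1 + s)⁻¹ * (lam p.2 + s)⁻¹ : ℝ)) : ℂ) *
      ((star (u p.1) ⬝ᵥ A.mulVec (u p.2)) * (star (u p.2) ⬝ᵥ B.mulVec (u p.1))) :=
    fun s => by rw [Fintype.sum_prod_type]
  calc (∫ s in Set.Ioi (0:ℝ), ∑ k, ∑ ℓ, ((((lam k + s)⁻¹ * (lam ℓ + s)⁻¹ : ℝ)) : ℂ) *
      ((star (u k) ⬝ᵥ A.mulVec (u ℓ)) * (star (u ℓ) ⬝ᵥ B.mulVec (u k))))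
      = ∫ s in Set.Ioi (0:ℝ), ∑ p : Fin n × Fin n,
          ((((lam p.1 + s)⁻¹ * (lam p.2 + s)⁻¹ : ℝ)) : ℂ) *
          ((star (u p.1) ⬝ᵥ A.mulVec (u p.2)) * (star (u p.2) ⬝ᵥ B.mulVec (u p.1))) := by
        simp_rw [hsum]
    _ = ∑ p : Fin n × Fin n, ∫ s in Set.Ioi (0:ℝ),
          ((((lam p.1 + s)⁻¹ * (lam p.2 + s)⁻¹ : ℝ)) : ℂ) *
          ((star (u p.1) ⬝ᵥ A.mulVec (u p.2)) * (star (u p.2) ⬝ᵥ B.mulVec (u p.1))) := by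
        apply integral_finset_sum
        intro p _
        exact ((cKM_integrableOn (lam p.1) (lam p.2) (hlam p.1) (hlam p.2)).ofReal).mul_const _
    _ = ∑ p : Fin n × Fin n, (cKM (lam p.1) (lam p.2) : ℂ) *
          ((star (u p.1) ⬝ᵥ A.mulVec (u p.2)) * (star (u p.2) ⬝ᵥ B.mulVec (u p.1))) := by
        refine Finset.sum_congr rfl fun p _ => ?_
        rw [integral_mul_const]
        congr 1
        rw [← cKM_integral (lam p.1) (lam p.2) (hlam p.1) (hlam p.2)]
        exact integral_ofReal
    _ = _ := by
        rw [Fintype.sum_prod_type]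
        exact Finset.sum_congr rfl fun k _ => Finset.sum_congr rfl fun ℓ _ => by ring
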